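/- In ℝ³, for 0 < ε ≤ 1/2, the point a₃* = (ε², ε², ε²) lies on the boundary of the cube Π* = [-ε²,ε²]³, and the dual lattice Λ₁* = (Aᵀ)^{-1}ℤ³ (with A as in the paper's example) satisfies Π* ∩ Λ₁* = {0, ±a₃*} and int(Π*) ∩ Λ₁* = {0}; hence μ₁(Π*, Λ₁*) = 1. -/

import Mathlib

open Matrix
open scoped BigOperators Pointwise

/-- The first successive minimum of a set `M ⊆ ℝ³` with respect to a lattice
(given as a set) `Λ ⊆ ℝ³`. -/
noncomputable def firstMin (Λ : Set (Fin 3 → ℝ)) (M : Set (Fin 3 → ℝ)) : ℝ :=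
  sInf {μ : ℝ | 0 < μ ∧ ∃ v ∈ Λ, v ≠ 0 ∧ v ∈ μ • M}

private lemma int_eq_zero_of_abs_cast_lt_one {k : ℤ} (h : |(k : ℝ)| < 1) : k = 0 := by
  by_contra hk
  have h1 : (1 : ℤ) ≤ |k| := Int.one_le_abs hk
  have : (1 : ℝ) ≤ |(k : ℝ)| := by exact_mod_cast (by push_cast at h1 ⊢; exact_mod_cast h1 : (1:ℝ) ≤ |(k:ℝ)|)
  linarith

set_option maxHeartbeats 1000000 in
/-- For `0 < ε ≤ 1/2`, with `A` the matrix of the paper's example and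
`Λ₁* = (Aᵀ)⁻¹ℤ³`, the point `a₃* = (ε², ε², ε²)` lies on the boundary of the
cube `Π* = [-ε²,ε²]³`, the only points of `Λ₁*` in `Π*` are `0` and `±a₃*`,
the interior of `Π*` contains no nonzero point of `Λ₁*`, and
`μ₁(Π*, Λ₁*) = 1`. -/
theorem stmt_19 (ε : ℝ) (hε0 : 0 < ε) (hε : ε ≤ 1/2) :
    let A : Matrix (Fin 3) (Fin 3) ℝ :=
      !![ε / Real.sqrt 3,    2*ε / Real.sqrt 3, 1/(3*ε^2);
         ε / Real.sqrt 3,    -ε / Real.sqrt 3,  1/(3*ε^2);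
         -2*ε / Real.sqrt 3, -ε / Real.sqrt 3,  1/(3*ε^2)]
    let Λ : Set (Fin 3 → ℝ) :=
      Set.range (fun x : Fin 3 → ℤ => (Aᵀ)⁻¹.mulVec (fun i => (x i : ℝ)))
    let P : Set (Fin 3 → ℝ) := {z | ∀ i, |z i| ≤ ε ^ 2}
    let a : Fin 3 → ℝ := fun _ => ε ^ 2
    a ∈ frontier P ∧
      P ∩ Λ = {0, a, -a} ∧
      interior P ∩ Λ = {0} ∧
      firstMin Λ P = 1 := by
  intro A Λ P a
  set s : ℝ := Real.sqrt 3 with hs_def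
  have hs2 : s ^ 2 = 3 := Real.sq_sqrt (by norm_num)
  have hs0 : 0 < s := Real.sqrt_pos.mpr (by norm_num)
  have hsle : s ≤ 2 := by nlinarith
  have hε2 : (0:ℝ) < ε ^ 2 := by positivity
  have hεs : (0:ℝ) < ε * s := mul_pos hε0 hs0
  set B : Matrix (Fin 3) (Fin 3) ℝ :=
    !![0, 1/(ε*s), ε^2;
       1/(ε*s), -(1/(ε*s)), ε^2;
       -(1/(ε*s)), 0, ε^2] with hB
  -- inverse computation
  have hAB : Aᵀ * B = 1 := by
    have hAT : Aᵀ = !![ε / s, ε / s, -2*ε / s;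
                       2*ε / s, -ε / s, -ε / s;
                       1/(3*ε^2), 1/(3*ε^2), 1/(3*ε^2)] := by
      ext i j; fin_cases i <;> fin_cases j <;> rfl
    rw [hAT, hB]
    ext i j
    fin_cases i <;> fin_cases j <;>
      simp [Matrix.mul_apply, Fin.sum_univ_three, Matrix.one_apply] <;>
      field_simp <;> nlinarith [hs2, hs0, hε0]
  have hInv : (Aᵀ)⁻¹ = B := Matrix.inv_eq_right_inv hAB
  have hΛ : Λ = Set.range (fun x : Fin 3 → ℤ => B.mulVec (fun i => (x i : ℝ))) := by
    rw [show Λ = Set.range (fun x : Fin 3 → ℤ => (Aᵀ)⁻¹.mulVec (fun i => (x i : ℝ))) from rfl,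
      hInv]
  -- components of lattice vectors
  have hv0 : ∀ x : Fin 3 → ℤ, B.mulVec (fun i => (x i : ℝ)) 0
      = (x 1 : ℝ)/(ε*s) + ε^2 * x 2 := by
    intro x; rw [hB]; simp [Matrix.mulVec, dotProduct, Fin.sum_univ_three]; ring
  have hv1 : ∀ x : Fin 3 → ℤ, B.mulVec (fun i => (x i : ℝ)) 1
      = (x 0 : ℝ)/(ε*s) - (x 1 : ℝ)/(ε*s) + ε^2 * x 2 := by
    intro x; rw [hB]; simp [Matrix.mulVec, dotProduct, Fin.sum_univ_three]; ring
  have hv2 : ∀ x : Fin 3 → ℤ, B.mulVec (fun i => (x i : ℝ)) 2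
      = -((x 0 : ℝ)/(ε*s)) + ε^2 * x 2 := by
    intro x; rw [hB]; simp [Matrix.mulVec, dotProduct, Fin.sum_univ_three]; ring
  have hsmall : 2 * (ε^2 * (ε * s)) < 1 := by
    nlinarith [pow_le_pow_left₀ hε0.le hε 3, hs0.le, hsle, pow_pos hε0 3]
  -- key : if all coordinates are ≤ ε² in absolute value, first two integer coords vanish
  have key : ∀ x : Fin 3 → ℤ, (∀ i, |B.mulVec (fun i => (x i : ℝ)) i| ≤ ε^2) →
      x 0 = 0 ∧ x 1 = 0 := by
    intro x h
    have h0 := abs_le.mp ((hv0 x) ▸ h 0)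
    have h1 := abs_le.mp ((hv1 x) ▸ h 1)
    have h2 := abs_le.mp ((hv2 x) ▸ h 2)
    -- multiply through by ε*s
    set u0 : ℝ := (x 1 : ℝ)/(ε*s) + ε^2 * x 2 with hu0
    set u1 : ℝ := (x 0 : ℝ)/(ε*s) - (x 1 : ℝ)/(ε*s) + ε^2 * x 2 with hu1
    set u2 : ℝ := -((x 0 : ℝ)/(ε*s)) + ε^2 * x 2 with hu2
    have e01 : ((x 0 : ℝ) + x 1) = (u0 - u2) * (ε*s) := by
      rw [hu0, hu2]; field_simp; ring
    have e02 : (2*(x 1 : ℝ) - x 0) = (u0 - u1) * (ε*s) := by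
      rw [hu0, hu1]; field_simp; ring
    have d1 : |u0 - u2| ≤ 2*ε^2 := abs_le.mpr ⟨by linarith [h0.1, h2.2], by linarith [h0.2, h2.1]⟩
    have d2 : |u0 - u1| ≤ 2*ε^2 := abs_le.mpr ⟨by linarith [h0.1, h1.2], by linarith [h0.2, h1.1]⟩
    have hb1 : |((x 0 : ℝ) + x 1)| < 1 := by
      rw [e01, abs_mul, abs_of_pos hεs]
      calc |u0 - u2| * (ε*s) ≤ 2*ε^2 * (ε*s) :=
            mul_le_mul_of_nonneg_right d1 hεs.le
        _ = 2 * (ε^2 * (ε*s)) := by ring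
        _ < 1 := hsmall
    have hb2 : |(2*(x 1 : ℝ) - x 0)| < 1 := by
      rw [e02, abs_mul, abs_of_pos hεs]
      calc |u0 - u1| * (ε*s) ≤ 2*ε^2 * (ε*s) :=
            mul_le_mul_of_nonneg_right d2 hεs.le
        _ = 2 * (ε^2 * (ε*s)) := by ring
        _ < 1 := hsmall
    have i1 : x 0 + x 1 = 0 := by
      apply int_eq_zero_of_abs_cast_lt_one; push_cast; exact hb1
    have i2 : 2 * x 1 - x 0 = 0 := by
      apply int_eq_zero_of_abs_cast_lt_one; push_cast; exact hb2
    constructor <;> omega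
  -- value of a lattice vector whose first two coords vanish
  have hval : ∀ x : Fin 3 → ℤ, x 0 = 0 → x 1 = 0 →
      B.mulVec (fun i => (x i : ℝ)) = fun _ => ε^2 * x 2 := by
    intro x e0 e1
    funext i
    fin_cases i <;> rw [hB] <;>
      simp [Matrix.mulVec, dotProduct, Fin.sum_univ_three, e0, e1]
  -- P as a closed ball
  have hPdef : P = {z : Fin 3 → ℝ | ∀ i, |z i| ≤ ε ^ 2} := rfl
  have hPball : P = Metric.closedBall (0 : Fin 3 → ℝ) (ε^2) := by
    ext z
    rw [Metric.mem_closedBall, dist_zero_right, pi_norm_le_iff_of_nonneg hε2.le]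
    simp [hPdef, Real.norm_eq_abs]
  have haP : a ∈ P := by
    intro i; show |ε^2| ≤ ε^2; rw [abs_of_pos hε2]
  have hnaP : -a ∈ P := by
    intro i; show |(-a) i| ≤ ε^2
    simp only [Pi.neg_apply, abs_neg]
    show |ε^2| ≤ ε^2; rw [abs_of_pos hε2]
  have hint : interior P = Metric.ball (0 : Fin 3 → ℝ) (ε^2) := by
    rw [hPball, interior_closedBall _ hε2.ne']
  have haNI : a ∉ interior P := by
    rw [hint, Metric.mem_ball, dist_zero_right]
    have := norm_le_pi_norm a 0
    have ha0 : ‖a 0‖ = ε^2 := by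
      show ‖ε^2‖ = ε^2; rw [Real.norm_eq_abs, abs_of_pos hε2]
    rw [ha0] at this
    linarith
  -- membership of 0, a, -a in the lattice
  have h0Λ : (0 : Fin 3 → ℝ) ∈ Λ := by
    rw [hΛ]
    refine ⟨0, ?_⟩
    show B.mulVec (fun i => (((0 : Fin 3 → ℤ) i : ℝ))) = (0 : Fin 3 → ℝ)
    have h00 : (fun i => (((0 : Fin 3 → ℤ) i : ℝ))) = (0 : Fin 3 → ℝ) := by funext i; simp
    rw [h00, Matrix.mulVec_zero]
  have haΛ : a ∈ Λ := by
    rw [hΛ]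
    refine ⟨![0, 0, 1], ?_⟩
    show B.mulVec (fun i => ((![0,0,1] : Fin 3 → ℤ) i : ℝ)) = a
    rw [hval ![0,0,1] rfl rfl]
    funext i; show ε^2 * (((![0,0,1] : Fin 3 → ℤ) 2 :ℝ)) = ε^2; show ε^2 * ((1:ℤ):ℝ) = ε^2; norm_num
  have hnaΛ : -a ∈ Λ := by
    rw [hΛ]
    refine ⟨![0, 0, -1], ?_⟩
    show B.mulVec (fun i => ((![0,0,-1] : Fin 3 → ℤ) i : ℝ)) = -a
    rw [hval ![0,0,-1] rfl rfl]
    funext i; show ε^2 * (((![0,0,-1] : Fin 3 → ℤ) 2 :ℝ)) = -(ε^2); show ε^2 * ((-1:ℤ):ℝ) = -(ε^2); norm_num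
  have hane : a ≠ 0 := by
    intro h
    exact hε2.ne' (congrFun h 0)
  -- the intersection result
  have hPΛ : P ∩ Λ = {0, a, -a} := by
    ext v
    constructor
    · rintro ⟨hvP, hvΛ⟩
      rw [hΛ] at hvΛ
      obtain ⟨x, hx⟩ := hvΛ
      have hx' : B.mulVec (fun i => (x i : ℝ)) = v := hx
      rw [← hx'] at hvP ⊢
      obtain ⟨e0, e1⟩ := key x (fun i => hvP i)
      have hval' := hval x e0 e1
      have h0 := hvP 0
      rw [hval'] at h0 ⊢
      simp only at h0
      have hk : |(x 2 : ℝ)| ≤ 1 := by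
        rw [abs_mul, abs_of_pos hε2] at h0
        nlinarith [abs_nonneg ((x 2 : ℝ))]
      have hk' : -1 ≤ x 2 ∧ x 2 ≤ 1 := by
        have := abs_le.mp hk
        constructor <;> [exact_mod_cast this.1; exact_mod_cast this.2]
      have hcase : x 2 = -1 ∨ x 2 = 0 ∨ x 2 = 1 := by omega
      simp only [Set.mem_insert_iff, Set.mem_singleton_iff]
      rcases hcase with h | h | h <;> rw [h]
      · right; right
        funext i; show ε^2 * ((-1:ℤ):ℝ) = -(ε^2); push_cast; ring
      · left
        funext i; show ε^2 * ((0:ℤ):ℝ) = 0; push_cast; ring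
      · right; left
        funext i; show ε^2 * ((1:ℤ):ℝ) = ε^2; push_cast; ring
    · rintro (rfl | rfl | h)
      · exact ⟨fun i => by simpa using hε2.le, h0Λ⟩
      · exact ⟨haP, haΛ⟩
      · rw [Set.mem_singleton_iff] at h
        rw [h]
        exact ⟨hnaP, hnaΛ⟩
  -- interior intersection
  have hIΛ : interior P ∩ Λ = {0} := by
    ext v
    constructor
    · rintro ⟨hvI, hvΛ⟩
      rw [hΛ] at hvΛ
      obtain ⟨x, hx⟩ := hvΛ
      have hx' : B.mulVec (fun i => (x i : ℝ)) = v := hx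
      rw [← hx'] at hvI ⊢
      rw [hint, Metric.mem_ball, dist_zero_right] at hvI
      have hstrict : ∀ i, |B.mulVec (fun i => (x i : ℝ)) i| < ε^2 := by
        intro i
        calc |B.mulVec (fun i => (x i : ℝ)) i| = ‖B.mulVec (fun i => (x i : ℝ)) i‖ := by
              rw [Real.norm_eq_abs]
          _ ≤ ‖B.mulVec (fun i => (x i : ℝ))‖ := norm_le_pi_norm _ i
          _ < ε^2 := hvI
      obtain ⟨e0, e1⟩ := key x (fun i => (hstrict i).le)
      have hval' := hval x e0 e1
      have h0 := hstrict 0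
      rw [hval'] at h0 ⊢
      simp only at h0
      have hk : |(x 2 : ℝ)| < 1 := by
        rw [abs_mul, abs_of_pos hε2] at h0
        nlinarith [abs_nonneg ((x 2 : ℝ))]
      have hk' : x 2 = 0 := int_eq_zero_of_abs_cast_lt_one hk
      rw [hk', Set.mem_singleton_iff]
      funext i; show ε^2 * ((0:ℤ):ℝ) = 0; push_cast; ring
    · rintro rfl
      refine ⟨?_, h0Λ⟩
      rw [hint, Metric.mem_ball, dist_zero_right]
      simpa using hε2
  refine ⟨?_, hPΛ, hIΛ, ?_⟩
  · -- frontier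
    rw [frontier, hPball, IsClosed.closure_eq Metric.isClosed_closedBall]
    rw [← hPball]
    exact ⟨haP, haNI⟩
  · -- firstMin
    unfold firstMin
    have hmem1 : (1:ℝ) ∈ {μ : ℝ | 0 < μ ∧ ∃ v ∈ Λ, v ≠ 0 ∧ v ∈ μ • P} := by
      exact ⟨one_pos, a, haΛ, hane, by rw [one_smul]; exact haP⟩
    have hlb : ∀ μ ∈ {μ : ℝ | 0 < μ ∧ ∃ v ∈ Λ, v ≠ 0 ∧ v ∈ μ • P}, (1:ℝ) ≤ μ := by
      rintro μ ⟨hμ0, v, hvΛ, hvne, hvμ⟩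
      by_contra hlt
      push_neg at hlt
      obtain ⟨w, hwP, rfl⟩ := hvμ
      have hvI : (μ • w) ∈ interior P := by
        rw [hint, Metric.mem_ball, dist_zero_right]
        rw [pi_norm_lt_iff hε2]
        intro i
        show ‖(μ • w) i‖ < ε^2
        rw [Pi.smul_apply, smul_eq_mul, Real.norm_eq_abs, abs_mul, abs_of_pos hμ0]
        calc μ * |w i| ≤ μ * ε^2 := by
              exact mul_le_mul_of_nonneg_left (hwP i) hμ0.le
          _ < 1 * ε^2 := by nlinarith
          _ = ε^2 := one_mul _
      have : μ • w ∈ interior P ∩ Λ := ⟨hvI, hvΛ⟩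
      rw [hIΛ] at this
      exact hvne this
    apply le_antisymm
    · exact csInf_le ⟨0, fun μ hμ => hμ.1.le⟩ hmem1
    · exact le_csInf ⟨1, hmem1⟩ hlb
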